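/- Let a^n = u₀ d v₀⁻¹ c be a cyclically reduced word written as a cyclic concatenation of four segments, where c and d each have length at most 1, u₀ and v₀ are nonempty, n is odd, a is not a single letter, and the centralizer of a^n is ⟨a⟩. Then the two six-element multisets of words {u₀, u₀⁻¹, cu₀, u₀d, u₀⁻¹c⁻¹, d⁻¹u₀⁻¹} and {v₀, v₀⁻¹, c⁻¹v₀, v₀d⁻¹, v₀⁻¹c, dv₀⁻¹} are distinct. -/

import Mathlib

/-- `n`-fold concatenation of a word with itself. -/
def wpow {α : Type*} (w : List α) (n : ℕ) : List α := (List.replicate n w).flatten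

/-- A word is reduced if no adjacent pair of letters cancels. -/
def Reduced {α : Type*} (w : List (α × Bool)) : Prop :=
  List.Chain' (fun a b => ¬(b.1 = a.1 ∧ b.2 = !a.2)) w

/-- A word is cyclically reduced if every cyclic shift of it is reduced. -/
def CycReduced {α : Type*} (w : List (α × Bool)) : Prop :=
  ∀ u v : List (α × Bool), w = u ++ v → Reduced (v ++ u)

/-- Formal inverse of a word. -/
def wordInv {α : Type*} (w : List (α × Bool)) : List (α × Bool) :=
  (w.map fun p => (p.1, !p.2)).reverse

namespace SMD
open List

variable {α : Type*}

@[simp] lemma wordInv_nil : wordInv ([] : List (α × Bool)) = [] := rfl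
@[simp] lemma wordInv_length (w : List (α × Bool)) : (wordInv w).length = w.length := by
  simp [wordInv]
@[simp] lemma wordInv_append (u v : List (α × Bool)) :
    wordInv (u ++ v) = wordInv v ++ wordInv u := by simp [wordInv]
@[simp] lemma wordInv_singleton (x : α × Bool) : wordInv [x] = [(x.1, !x.2)] := rfl
@[simp] lemma wordInv_wordInv (w : List (α × Bool)) : wordInv (wordInv w) = w := by
  simp [wordInv, List.map_reverse, Function.comp_def]
@[simp] lemma wordInv_eq_nil {w : List (α × Bool)} : wordInv w = [] ↔ w = [] := by
  constructor
  · intro h; have := congrArg List.length h; simpa using this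
  · rintro rfl; rfl
lemma wordInv_cons (x : α × Bool) (w : List (α × Bool)) :
    wordInv (x :: w) = wordInv w ++ [(x.1, !x.2)] := by simp [wordInv]
@[simp] lemma wordInv_replicate (m : ℕ) (x : α × Bool) :
    wordInv (replicate m x) = replicate m (x.1, !x.2) := by
  simp [wordInv, List.map_replicate]
lemma head?_wordInv (w : List (α × Bool)) :
    (wordInv w).head? = w.getLast?.map (fun x => (x.1, !x.2)) := by
  simp [wordInv, List.head?_reverse, List.getLast?_map]
lemma getLast?_wordInv (w : List (α × Bool)) :
    (wordInv w).getLast? = w.head?.map (fun x => (x.1, !x.2)) := by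
  simp [wordInv, List.getLast?_reverse, List.head?_map]

/-- A reduced word followed by its inverse (and anything) is not reduced, unless empty. -/
lemma eq_nil_of_reduced_append_inv {x r : List (α × Bool)}
    (h : Reduced (x ++ (wordInv x ++ r))) : x = [] := by
  rcases x.eq_nil_or_concat with rfl | ⟨m, y, rfl⟩
  · rfl
  · exfalso
    rw [List.concat_eq_append] at h
    have h3 := (List.isChain_append.mp h).2.2
    have hx : y ∈ (m ++ [y]).getLast? := by rw [List.getLast?_concat]; rfl
    have hy : (y.1, !y.2) ∈ (wordInv (m ++ [y]) ++ r).head? := by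
      rw [List.head?_append, wordInv_append, wordInv_singleton]
      simp
    exact h3 y hx (y.1, !y.2) hy ⟨rfl, rfl⟩

lemma reduced_ne_wordInv_aux : ∀ (nn : ℕ) (w : List (α × Bool)), w.length = nn →
    Reduced w → w ≠ [] → w ≠ wordInv w := by
  intro nn
  induction nn using Nat.strong_induction_on with
  | _ nn ih =>
  intro w hL hr hne heq
  obtain ⟨x, t, rfl⟩ := List.exists_cons_of_ne_nil hne
  rcases t.eq_nil_or_concat with rfl | ⟨m, y, rfl⟩
  · rw [wordInv_cons] at heq
    simp at heq
    have h2 := congrArg Prod.snd heq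
    simp at h2
  · simp only [List.concat_eq_append] at heq hr hL
    rw [wordInv_cons, wordInv_append, wordInv_singleton, List.cons_append] at heq
    injection heq with hx ht
    have hxy : (x.1, !x.2) = y := by rw [hx]; simp
    have hm : m = wordInv m := by
      rw [hxy] at ht
      simp only [List.append_eq, List.nil_append] at ht
      rwa [List.append_left_inj] at ht
    rcases eq_or_ne m [] with rfl | hmne
    · have := (List.isChain_cons_cons.mp hr).1
      exact this ⟨by rw [hx], by rw [hx]; simp⟩
    · have hrm : Reduced m := hr.infix ⟨[x], [y], by simp⟩
      exact ih m.length (by simp at hL; omega) m rfl hrm hmne hm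

lemma reduced_ne_wordInv {w : List (α × Bool)} (hr : Reduced w) (hne : w ≠ []) :
    w ≠ wordInv w :=
  reduced_ne_wordInv_aux w.length w rfl hr hne

lemma cons_eq_append_singleton {γ : Type*} :
    ∀ {l : List γ} {x y : γ}, x :: l = l ++ [y] → x = y ∧ l = List.replicate l.length x := by
  intro l
  induction l with
  | nil => intro x y h; simp at h; exact ⟨h, rfl⟩
  | cons z t ih =>
    intro x y h
    rw [List.cons_append] at h
    injection h with h1 h2
    subst h1
    obtain ⟨rfl, h4⟩ := ih h2
    refine ⟨rfl, ?_⟩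
    show x :: t = List.replicate (t.length + 1) x
    rw [List.replicate_succ]
    exact congrArg (List.cons x) h4

lemma wpow_zero (w : List α) : wpow w 0 = [] := rfl

lemma wpow_succ (w : List α) (n : ℕ) : wpow w (n + 1) = w ++ wpow w n := by
  simp [wpow, List.replicate_succ]

@[simp] lemma wpow_nil (n : ℕ) : wpow ([] : List α) n = [] := by
  induction n with
  | zero => rfl
  | succ n ih => rw [wpow_succ, List.nil_append]; exact ih

lemma wpow_succ' (w : List α) (n : ℕ) : wpow w (n + 1) = wpow w n ++ w := by
  simp [wpow, List.replicate_succ']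

@[simp] lemma length_wpow (w : List α) (n : ℕ) : (wpow w n).length = n * w.length := by
  induction n with
  | zero => simp [wpow]
  | succ n ih => rw [wpow_succ, List.length_append, ih]; ring

lemma head?_wpow_mem {w : List α} {n : ℕ} {y : α} (hy : y ∈ (wpow w n).head?) :
    y ∈ w.head? := by
  induction n with
  | zero => simp [wpow_zero] at hy
  | succ n ih =>
    rcases w with _ | ⟨a0, w'⟩
    · simp [wpow_nil] at hy
    · rwa [wpow_succ, List.head?_append_of_ne_nil _ (List.cons_ne_nil _ _)] at hy

lemma getLast?_wpow {w : List α} {n : ℕ} (hn : n ≠ 0) (hw : w ≠ []) :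
    (wpow w n).getLast? = w.getLast? := by
  obtain ⟨m, rfl⟩ : ∃ k, n = k + 1 := ⟨n - 1, (Nat.succ_pred_eq_of_pos (Nat.pos_of_ne_zero hn)).symm⟩
  rw [wpow_succ', List.getLast?_append_of_ne_nil _ hw]

lemma head?_wpow {w : List α} {n : ℕ} (hn : n ≠ 0) (hw : w ≠ []) :
    (wpow w n).head? = w.head? := by
  obtain ⟨m, rfl⟩ : ∃ k, n = k + 1 := ⟨n - 1, (Nat.succ_pred_eq_of_pos (Nat.pos_of_ne_zero hn)).symm⟩
  rw [wpow_succ, List.head?_append_of_ne_nil _ hw]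

lemma reduced_wpow {p : List (α × Bool)} (hp : Reduced p)
    (hj : ∀ x ∈ p.getLast?, ∀ y ∈ p.head?, ¬(y.1 = x.1 ∧ y.2 = !x.2)) (n : ℕ) :
    Reduced (wpow p n) := by
  induction n with
  | zero => exact List.isChain_nil
  | succ n ih =>
    rw [wpow_succ]
    exact List.isChain_append.mpr ⟨hp, ih, fun x hx y hy => hj x hx y (head?_wpow_mem hy)⟩


lemma reduce_eq_self [DecidableEq α] : ∀ {w : List (α × Bool)}, Reduced w →
    FreeGroup.reduce w = w := by
  intro w
  induction w with
  | nil => intro _; rfl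
  | cons x t ih =>
    intro h
    have ht := ih (List.IsChain.tail h)
    rw [FreeGroup.reduce.cons, ht]
    cases t with
    | nil => rfl
    | cons y tt =>
      have hxy := (List.isChain_cons_cons.mp h).1
      have hcond : ¬(x.1 = y.1 ∧ x.2 = !y.2) := by
        rintro ⟨h1, h2⟩
        exact hxy ⟨h1.symm, by rw [h2, Bool.not_not]⟩
      show (if x.1 = y.1 ∧ x.2 = !y.2 then tt else x :: y :: tt) = x :: y :: tt
      rw [if_neg hcond]

lemma mk_wpow (p : List (α × Bool)) (n : ℕ) :
    FreeGroup.mk (wpow p n) = FreeGroup.mk p ^ n := (FreeGroup.pow_mk n).symm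

lemma mk_pow_injective {p : List (α × Bool)} (hne : p ≠ []) (hred : ∀ m, Reduced (wpow p m))
    {m m' : ℕ} (h : FreeGroup.mk p ^ m = FreeGroup.mk p ^ m') : m = m' := by
  classical
  rw [← mk_wpow, ← mk_wpow] at h
  have h2 := congrArg FreeGroup.toWord h
  rw [FreeGroup.toWord_mk, FreeGroup.toWord_mk, reduce_eq_self (hred m),
    reduce_eq_self (hred m')] at h2
  have h3 := congrArg List.length h2
  rw [length_wpow, length_wpow] at h3
  have hp : 0 < p.length := List.length_pos_iff.mpr hne
  exact Nat.eq_of_mul_eq_mul_right hp h3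

lemma mk_zpow_injective {p : List (α × Bool)} (hne : p ≠ []) (hred : ∀ m, Reduced (wpow p m))
    {k k' : ℤ} (h : FreeGroup.mk p ^ k = FreeGroup.mk p ^ k') : k = k' := by
  have key : ∀ j : ℤ, FreeGroup.mk p ^ j = 1 → j = 0 := by
    intro j hj
    rcases j with m | m
    · rw [Int.ofNat_eq_coe, zpow_natCast] at hj
      have := mk_pow_injective hne hred (m := m) (m' := 0) (by simpa using hj)
      simp [this]
    · rw [zpow_negSucc] at hj
      rw [inv_eq_one] at hj
      have := mk_pow_injective hne hred (m := m + 1) (m' := 0) (by simpa using hj)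
      omega
  have h0 : FreeGroup.mk p ^ (k - k') = 1 := by
    rw [zpow_sub, h]
    simp
  have := key _ h0
  omega

lemma endgame_square {a s : List (α × Bool)} {n : ℕ} (hn : Odd n) (hane : a ≠ [])
    (hred : ∀ m, Reduced (wpow a m))
    (hcen : Subgroup.centralizer {FreeGroup.mk (wpow a n)} = Subgroup.zpowers (FreeGroup.mk a))
    (hW : wpow a n = s ++ s) : False := by
  have hx : FreeGroup.mk s ∈ Subgroup.centralizer {FreeGroup.mk (wpow a n)} := by
    rw [Subgroup.mem_centralizer_iff]
    rintro g hg
    rw [Set.mem_singleton_iff] at hg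
    subst hg
    rw [hW, FreeGroup.mul_mk, FreeGroup.mul_mk, List.append_assoc]
  rw [hcen, Subgroup.mem_zpowers_iff] at hx
  obtain ⟨k, hk⟩ := hx
  have h2 : FreeGroup.mk a ^ (k + k) = FreeGroup.mk a ^ (n : ℤ) := by
    rw [zpow_add, hk, zpow_natCast, ← mk_wpow, hW, ← FreeGroup.mul_mk]
  have h3 := mk_zpow_injective hane hred h2
  obtain ⟨t, ht⟩ := hn
  omega

lemma endgame_replicate {a : List (α × Bool)} {ℓ : α × Bool} {n N : ℕ}
    (ha : 1 < a.length) (hn : n ≠ 0)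
    (hcen : Subgroup.centralizer {FreeGroup.mk (wpow a n)} = Subgroup.zpowers (FreeGroup.mk a))
    (hW : wpow a n = List.replicate N ℓ) : False := by
  obtain ⟨m, rfl⟩ : ∃ k, n = k + 1 :=
    ⟨n - 1, (Nat.succ_pred_eq_of_pos (Nat.pos_of_ne_zero hn)).symm⟩
  have hpre : a <+: wpow a (m + 1) := ⟨wpow a m, (wpow_succ a m).symm⟩
  have haℓ : a = List.replicate a.length ℓ := by
    apply List.eq_replicate_of_mem
    intro b hb
    have hb2 : b ∈ List.replicate N ℓ := by rw [← hW]; exact hpre.subset hb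
    exact List.eq_of_mem_replicate hb2
  have hsred : ∀ q, Reduced (wpow [ℓ] q) := by
    apply reduced_wpow
    · exact List.isChain_singleton _
    · intro x hx y hy hcancel
      simp only [List.getLast?_singleton, Option.mem_some_iff, List.head?_cons] at hx hy
      subst hx; subst hy
      exact Bool.not_ne_self ℓ.2 hcancel.2.symm
  have hrepl : ∀ q : ℕ, List.replicate q ℓ = wpow [ℓ] q := by
    intro q
    induction q with
    | zero => rfl
    | succ q ih => rw [List.replicate_succ, wpow_succ, ih]; rfl
  have hmka : FreeGroup.mk a = FreeGroup.mk [ℓ] ^ a.length := by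
    conv_lhs => rw [haℓ]
    rw [hrepl, mk_wpow]
  have hx : FreeGroup.mk [ℓ] ∈ Subgroup.centralizer {FreeGroup.mk (wpow a (m + 1))} := by
    rw [Subgroup.mem_centralizer_iff]
    rintro g hg
    rw [Set.mem_singleton_iff] at hg
    subst hg
    rw [hW, FreeGroup.mul_mk, FreeGroup.mul_mk]
    congr 1
    rw [← List.replicate_succ', List.singleton_append, ← List.replicate_succ]
  rw [hcen, Subgroup.mem_zpowers_iff] at hx
  obtain ⟨k, hk⟩ := hx
  have h2 : FreeGroup.mk [ℓ] ^ ((a.length : ℤ) * k) = FreeGroup.mk [ℓ] ^ (1 : ℤ) := by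
    have e : FreeGroup.mk [ℓ] ^ ((a.length : ℤ) * k) = (FreeGroup.mk [ℓ] ^ (a.length : ℤ)) ^ k :=
      zpow_mul _ _ _
    rw [e, zpow_natCast, ← hmka, hk, zpow_one]
  have h3 := mk_zpow_injective (by simp) hsred h2
  have hdvd : (a.length : ℤ) ∣ 1 := ⟨k, h3.symm⟩
  have := Int.le_of_dvd one_pos hdvd
  omega

lemma getLast?_cons_ne {γ : Type*} (x : γ) {l : List γ} (h : l ≠ []) :
    (x :: l).getLast? = l.getLast? := by
  rw [show x :: l = [x] ++ l from rfl, List.getLast?_append_of_ne_nil _ h]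

lemma head?_replicate' {γ : Type*} {m : ℕ} (h : m ≠ 0) (x : γ) :
    (List.replicate m x).head? = some x := by
  obtain ⟨k, rfl⟩ : ∃ k, m = k + 1 := ⟨m - 1, (Nat.succ_pred_eq_of_pos (Nat.pos_of_ne_zero h)).symm⟩
  rw [List.replicate_succ]; rfl

lemma getLast?_replicate' {γ : Type*} {m : ℕ} (h : m ≠ 0) (x : γ) :
    (List.replicate m x).getLast? = some x := by
  obtain ⟨k, rfl⟩ : ∃ k, m = k + 1 := ⟨m - 1, (Nat.succ_pred_eq_of_pos (Nat.pos_of_ne_zero h)).symm⟩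
  rw [List.replicate_succ', List.getLast?_concat]

lemma head?_dropLast {γ : Type*} : ∀ {l : List γ}, 2 ≤ l.length → l.dropLast.head? = l.head?
  | [], h => by simp at h
  | [a], h => by simp at h
  | a :: b :: t, _ => rfl

end SMD

open SMD in
/-- If the cyclically reduced word `a^n = u₀ d v₀⁻¹ c` with `|c|, |d| ≤ 1`,
`u₀, v₀` nonempty, `n` odd, `|a| > 1` and the centralizer of `a^n` is `⟨a⟩`,
then the two six-element multisets of words are distinct. -/
theorem sides_multisets_distinct {α : Type*} (a u₀ v₀ c d : List (α × Bool)) (n : ℕ)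
    (hn : Odd n) (ha : 1 < a.length)
    (hcyc : CycReduced (wpow a n))
    (hdecomp : wpow a n = u₀ ++ d ++ wordInv v₀ ++ c)
    (hc : c.length ≤ 1) (hd : d.length ≤ 1)
    (hu : u₀ ≠ []) (hv : v₀ ≠ [])
    (hcen : Subgroup.centralizer {FreeGroup.mk (wpow a n)}
      = Subgroup.zpowers (FreeGroup.mk a)) :
    ({u₀, wordInv u₀, c ++ u₀, u₀ ++ d, wordInv (c ++ u₀), wordInv (u₀ ++ d)} :
        Multiset (List (α × Bool)))
      ≠ ({v₀, wordInv v₀, wordInv c ++ v₀, v₀ ++ wordInv d,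
          wordInv (wordInv c ++ v₀), wordInv (v₀ ++ wordInv d)} :
        Multiset (List (α × Bool))) := by
  intro E
  have hn0 : n ≠ 0 := by rcases hn with ⟨t, ht⟩; omega
  have hane : a ≠ [] := by intro h; rw [h] at ha; simp at ha
  have hWlen : 2 ≤ (wpow a n).length := by
    rw [SMD.length_wpow]
    calc 2 = 1 * 2 := by norm_num
    _ ≤ n * a.length := Nat.mul_le_mul (by omega) (by omega)
  have hWne : wpow a n ≠ [] := by
    intro h
    rw [h] at hWlen
    simp at hWlen
  have hredW : Reduced (wpow a n) := by
    have := hcyc [] (wpow a n) (by simp)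
    simpa using this
  have hred : ∀ m, Reduced (wpow a m) := by
    apply reduced_wpow
    · exact hredW.prefix ⟨wpow a (n - 1), by rw [← wpow_succ]; congr 1; omega⟩
    · intro x hx y hy hcan
      have hx' : x ∈ (wpow a n).getLast? := by rwa [getLast?_wpow hn0 hane]
      have hy' : y ∈ (wpow a n).head? := by rwa [head?_wpow hn0 hane]
      have hrot := hcyc ((wpow a n).dropLast) [(wpow a n).getLast hWne]
        (by rw [List.dropLast_append_getLast])
      rw [List.singleton_append] at hrot
      have h5 := (List.isChain_cons.mp hrot).1
      rw [List.getLast?_eq_getLast hWne, Option.mem_some_iff] at hx'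
      subst hx'
      refine h5 y ?_ hcan
      rwa [head?_dropLast hWlen]
  have hu0red : Reduced u₀ :=
    hredW.prefix ⟨d ++ wordInv v₀ ++ c, by rw [hdecomp]; simp [List.append_assoc]⟩
  have hLM : u₀.length = v₀.length := by
    have hE := congrArg (fun s : Multiset (List (α × Bool)) => (s.map List.length).sum) E
    simp only [Multiset.insert_eq_cons, Multiset.map_cons, Multiset.map_singleton,
      Multiset.sum_cons, Multiset.sum_singleton, List.length_append, SMD.wordInv_length] at hE
    omega
  have hmem : u₀ ∈ ({v₀, wordInv v₀, wordInv c ++ v₀, v₀ ++ wordInv d,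
      wordInv (wordInv c ++ v₀), wordInv (v₀ ++ wordInv d)} : Multiset (List (α × Bool))) := by
    rw [← E]; simp
  have hcc : c = [] ∨ ∃ x, c = [x] := by
    rcases c with _ | ⟨x, _ | ⟨y, t⟩⟩
    · exact Or.inl rfl
    · exact Or.inr ⟨x, rfl⟩
    · simp at hc
  have hdd : d = [] ∨ ∃ x, d = [x] := by
    rcases d with _ | ⟨x, _ | ⟨y, t⟩⟩
    · exact Or.inl rfl
    · exact Or.inr ⟨x, rfl⟩
    · simp at hd
  clear hc hd
  rcases hcc with rfl | ⟨c0, rfl⟩ <;> rcases hdd with rfl | ⟨d0, rfl⟩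
  · -- c = [], d = []
    simp only [Multiset.insert_eq_cons, Multiset.mem_cons, Multiset.mem_singleton,
      SMD.wordInv_nil, List.nil_append, List.append_nil, SMD.wordInv_wordInv] at hmem
    have key1 : u₀ = v₀ → False := by
      intro h
      subst h
      have hh := hredW
      rw [hdecomp] at hh
      refine hu (eq_nil_of_reduced_append_inv (r := []) (x := u₀) ?_)
      simpa [List.append_assoc] using hh
    have key2 : u₀ = wordInv v₀ → False := by
      intro h
      have hv0 : v₀ = wordInv u₀ := by rw [h, SMD.wordInv_wordInv]
      subst hv0
      exact endgame_square hn hane hred hcen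
        (show wpow a n = u₀ ++ u₀ by rw [hdecomp]; simp)
    obtain h | h : u₀ = v₀ ∨ u₀ = wordInv v₀ := by tauto
    · exact key1 h
    · exact key2 h
  · -- c = [], d = [d0]
    simp only [Multiset.insert_eq_cons, Multiset.mem_cons, Multiset.mem_singleton,
      SMD.wordInv_nil, List.nil_append, List.append_nil, SMD.wordInv_wordInv,
      SMD.wordInv_singleton, SMD.wordInv_append, SMD.wordInv_cons, List.singleton_append, Bool.not_not] at hmem
    have key1 : u₀ = v₀ → False := by
      intro h; subst h
      have h2 := hcyc (u₀ ++ [d0]) (wordInv u₀) (by rw [hdecomp]; simp [List.append_assoc])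
      refine hu ?_
      have h3 := eq_nil_of_reduced_append_inv (x := wordInv u₀) (r := [d0])
        (by simpa [List.append_assoc] using h2)
      simpa using h3
    have key2 : u₀ = wordInv v₀ → False := by
      intro h
      have hv0 : v₀ = wordInv u₀ := by rw [h, SMD.wordInv_wordInv]
      subst hv0
      have hm2 : u₀ ++ [d0] ∈ ({wordInv u₀, wordInv (wordInv u₀), wordInv [] ++ wordInv u₀,
          wordInv u₀ ++ wordInv [d0], wordInv (wordInv [] ++ wordInv u₀),
          wordInv (wordInv u₀ ++ wordInv [d0])} : Multiset (List (α × Bool))) := by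
        rw [← E]; simp
      simp only [Multiset.insert_eq_cons, Multiset.mem_cons, Multiset.mem_singleton,
        SMD.wordInv_nil, List.nil_append, List.append_nil, SMD.wordInv_wordInv,
        SMD.wordInv_singleton, SMD.wordInv_append, SMD.wordInv_cons, List.singleton_append, Bool.not_not] at hm2
      obtain h2 | h2 | h2 | h2 : u₀ ++ [d0] = wordInv u₀ ∨ u₀ ++ [d0] = u₀ ∨
          u₀ ++ [d0] = wordInv u₀ ++ [(d0.1, !d0.2)] ∨ u₀ ++ [d0] = d0 :: u₀ := by tauto
      · have := congrArg List.length h2; simp at this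
      · have := congrArg List.length h2; simp at this
      · have h4 := congrArg List.getLast? h2
        rw [List.getLast?_concat, List.getLast?_concat] at h4
        have h5 := congrArg Prod.snd (Option.some.inj h4)
        simp at h5
      · obtain ⟨-, hrep⟩ := cons_eq_append_singleton h2.symm
        have hW : wpow a n = List.replicate ((wpow a n).length) d0 := by
          apply List.eq_replicate_of_mem
          intro b hb
          rw [hdecomp] at hb
          simp only [List.append_nil, SMD.wordInv_wordInv, List.mem_append,
            List.mem_singleton] at hb
          rcases hb with (hb | hb) | hb
          · exact List.eq_of_mem_replicate (hrep ▸ hb)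
          · exact hb
          · exact List.eq_of_mem_replicate (hrep ▸ hb)
        exact endgame_replicate ha hn0 hcen hW
    obtain h | h | h | h : u₀ = v₀ ∨ u₀ = wordInv v₀ ∨ u₀ = v₀ ++ [(d0.1, !d0.2)] ∨
        u₀ = d0 :: wordInv v₀ := by tauto
    · exact key1 h
    · exact key2 h
    · have := congrArg List.length h; simp at this; omega
    · have := congrArg List.length h; simp at this; omega
  · -- c = [c0], d = []
    simp only [Multiset.insert_eq_cons, Multiset.mem_cons, Multiset.mem_singleton,
      SMD.wordInv_nil, List.nil_append, List.append_nil, SMD.wordInv_wordInv,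
      SMD.wordInv_singleton, SMD.wordInv_append, SMD.wordInv_cons, List.singleton_append, Bool.not_not,
      Prod.mk.eta] at hmem
    have key1 : u₀ = v₀ → False := by
      intro h; subst h
      have hh := hredW
      rw [hdecomp] at hh
      refine hu (eq_nil_of_reduced_append_inv (x := u₀) (r := [c0]) ?_)
      simpa [List.append_assoc] using hh
    have key2 : u₀ = wordInv v₀ → False := by
      intro h
      have hv0 : v₀ = wordInv u₀ := by rw [h, SMD.wordInv_wordInv]
      subst hv0
      have hm2 : [c0] ++ u₀ ∈ ({wordInv u₀, wordInv (wordInv u₀), wordInv [c0] ++ wordInv u₀,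
          wordInv u₀ ++ wordInv [], wordInv (wordInv [c0] ++ wordInv u₀),
          wordInv (wordInv u₀ ++ wordInv [])} : Multiset (List (α × Bool))) := by
        rw [← E]; simp
      simp only [Multiset.insert_eq_cons, Multiset.mem_cons, Multiset.mem_singleton,
        SMD.wordInv_nil, List.nil_append, List.append_nil, SMD.wordInv_wordInv,
        SMD.wordInv_singleton, SMD.wordInv_append, SMD.wordInv_cons, List.singleton_append, Bool.not_not,
        Prod.mk.eta] at hm2
      obtain h2 | h2 | h2 | h2 : c0 :: u₀ = wordInv u₀ ∨ c0 :: u₀ = u₀ ∨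
          c0 :: u₀ = (c0.1, !c0.2) :: wordInv u₀ ∨ c0 :: u₀ = u₀ ++ [c0] := by tauto
      · have := congrArg List.length h2; simp at this
      · have := congrArg List.length h2; simp at this
      · injection h2 with h4 h5
        have h6 := congrArg Prod.snd h4
        simp at h6
      · obtain ⟨-, hrep⟩ := cons_eq_append_singleton h2
        have hW : wpow a n = List.replicate ((wpow a n).length) c0 := by
          apply List.eq_replicate_of_mem
          intro b hb
          rw [hdecomp] at hb
          simp only [List.append_nil, SMD.wordInv_wordInv, List.mem_append,
            List.mem_singleton] at hb
          rcases hb with (hb | hb) | hb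
          · exact List.eq_of_mem_replicate (hrep ▸ hb)
          · exact List.eq_of_mem_replicate (hrep ▸ hb)
          · exact hb
        exact endgame_replicate ha hn0 hcen hW
    obtain h | h | h | h : u₀ = v₀ ∨ u₀ = wordInv v₀ ∨ u₀ = (c0.1, !c0.2) :: v₀ ∨
        u₀ = wordInv v₀ ++ [c0] := by tauto
    · exact key1 h
    · exact key2 h
    · have := congrArg List.length h; simp at this; omega
    · have := congrArg List.length h; simp at this; omega
  · -- c = [c0], d = [d0]
    have huL : u₀.length ≠ 0 := fun h => hu (List.length_eq_zero_iff.mp h)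
    simp only [Multiset.insert_eq_cons, Multiset.mem_cons, Multiset.mem_singleton,
      SMD.wordInv_nil, List.nil_append, List.append_nil, SMD.wordInv_wordInv,
      SMD.wordInv_singleton, SMD.wordInv_append, SMD.wordInv_cons, List.singleton_append,
      Bool.not_not, Prod.mk.eta] at hmem
    have key1 : u₀ = v₀ → False := by
      intro h; subst h
      have hm2 : [c0] ++ u₀ ∈ ({u₀, wordInv u₀, wordInv [c0] ++ u₀, u₀ ++ wordInv [d0],
          wordInv (wordInv [c0] ++ u₀), wordInv (u₀ ++ wordInv [d0])} :
          Multiset (List (α × Bool))) := by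
        rw [← E]; simp
      simp only [Multiset.insert_eq_cons, Multiset.mem_cons, Multiset.mem_singleton,
        SMD.wordInv_nil, List.nil_append, List.append_nil, SMD.wordInv_wordInv,
        SMD.wordInv_singleton, SMD.wordInv_append, SMD.wordInv_cons, List.singleton_append,
        Bool.not_not, Prod.mk.eta] at hm2
      obtain h2 | h2 | h2 | h2 | h2 | h2 : c0 :: u₀ = u₀ ∨ c0 :: u₀ = wordInv u₀ ∨
          c0 :: u₀ = (c0.1, !c0.2) :: u₀ ∨ c0 :: u₀ = u₀ ++ [(d0.1, !d0.2)] ∨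
          c0 :: u₀ = wordInv u₀ ++ [c0] ∨ c0 :: u₀ = d0 :: wordInv u₀ := by tauto
      · have := congrArg List.length h2; simp at this
      · have := congrArg List.length h2; simp at this
      · injection h2 with h4 h5
        have h6 := congrArg Prod.snd h4
        simp at h6
      · obtain ⟨hcd, hrep⟩ := cons_eq_append_singleton h2
        have hlast : u₀.getLast? = some c0 := by
          rw [hrep]; exact getLast?_replicate' huL c0
        have hh := hredW
        rw [hdecomp] at hh
        have hh2 : Reduced (u₀ ++ (d0 :: (wordInv u₀ ++ [c0]))) := by
          simpa [List.append_assoc] using hh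
        have hj := (List.isChain_append.mp hh2).2.2
        refine hj c0 hlast d0 rfl ⟨(congrArg Prod.fst hcd).symm, ?_⟩
        rw [show c0.2 = !d0.2 from congrArg Prod.snd hcd, Bool.not_not]
      · have h4 := congrArg List.getLast? h2
        rw [getLast?_cons_ne c0 hu, List.getLast?_concat] at h4
        have h5 := congrArg List.head? h2
        rw [List.head?_cons, List.head?_append_of_ne_nil _
          (by simp [hu] : wordInv u₀ ≠ []), head?_wordInv, h4] at h5
        simp only [Option.map_some] at h5
        have h6 := congrArg Prod.snd (Option.some.inj h5)
        simp at h6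
      · injection h2 with h4 h5
        exact reduced_ne_wordInv hu0red hu h5
    have key2 : u₀ = wordInv v₀ → False := by
      intro h
      have hv0 : v₀ = wordInv u₀ := by rw [h, SMD.wordInv_wordInv]
      subst hv0
      have hm2 : [c0] ++ u₀ ∈ ({wordInv u₀, wordInv (wordInv u₀), wordInv [c0] ++ wordInv u₀,
          wordInv u₀ ++ wordInv [d0], wordInv (wordInv [c0] ++ wordInv u₀),
          wordInv (wordInv u₀ ++ wordInv [d0])} : Multiset (List (α × Bool))) := by
        rw [← E]; simp
      simp only [Multiset.insert_eq_cons, Multiset.mem_cons, Multiset.mem_singleton,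
        SMD.wordInv_nil, List.nil_append, List.append_nil, SMD.wordInv_wordInv,
        SMD.wordInv_singleton, SMD.wordInv_append, SMD.wordInv_cons, List.singleton_append,
        Bool.not_not, Prod.mk.eta] at hm2
      obtain h2 | h2 | h2 | h2 | h2 | h2 : c0 :: u₀ = wordInv u₀ ∨ c0 :: u₀ = u₀ ∨
          c0 :: u₀ = (c0.1, !c0.2) :: wordInv u₀ ∨ c0 :: u₀ = wordInv u₀ ++ [(d0.1, !d0.2)] ∨
          c0 :: u₀ = u₀ ++ [c0] ∨ c0 :: u₀ = d0 :: u₀ := by tauto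
      · have := congrArg List.length h2; simp at this
      · have := congrArg List.length h2; simp at this
      · injection h2 with h4 h5
        have h6 := congrArg Prod.snd h4
        simp at h6
      · -- getLast u₀ = (d0.1, !d0.2), contradicting the junction u₀ → d0
        have h4 := congrArg List.getLast? h2
        rw [getLast?_cons_ne c0 hu, List.getLast?_concat] at h4
        have hh := hredW
        rw [hdecomp] at hh
        have hh2 : Reduced (u₀ ++ (d0 :: (u₀ ++ [c0]))) := by
          simpa [List.append_assoc] using hh
        have hj := (List.isChain_append.mp hh2).2.2
        exact hj (d0.1, !d0.2) h4 d0 rfl ⟨rfl, (Bool.not_not d0.2).symm⟩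
      · obtain ⟨-, hrep⟩ := cons_eq_append_singleton h2
        have hhead : u₀.head? = some c0 := by
          rw [hrep]; exact head?_replicate' huL c0
        -- second membership: u₀ ++ [d0]
        have hm3 : u₀ ++ [d0] ∈ ({wordInv u₀, wordInv (wordInv u₀),
            wordInv [c0] ++ wordInv u₀, wordInv u₀ ++ wordInv [d0],
            wordInv (wordInv [c0] ++ wordInv u₀), wordInv (wordInv u₀ ++ wordInv [d0])} :
            Multiset (List (α × Bool))) := by
          rw [← E]; simp
        simp only [Multiset.insert_eq_cons, Multiset.mem_cons, Multiset.mem_singleton,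
          SMD.wordInv_nil, List.nil_append, List.append_nil, SMD.wordInv_wordInv,
          SMD.wordInv_singleton, SMD.wordInv_append, SMD.wordInv_cons, List.singleton_append,
          Bool.not_not, Prod.mk.eta] at hm3
        obtain h3 | h3 | h3 | h3 | h3 | h3 : u₀ ++ [d0] = wordInv u₀ ∨ u₀ ++ [d0] = u₀ ∨
            u₀ ++ [d0] = (c0.1, !c0.2) :: wordInv u₀ ∨
            u₀ ++ [d0] = wordInv u₀ ++ [(d0.1, !d0.2)] ∨
            u₀ ++ [d0] = u₀ ++ [c0] ∨ u₀ ++ [d0] = d0 :: u₀ := by tauto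
        · have := congrArg List.length h3; simp at this
        · have := congrArg List.length h3; simp at this
        · have h5 := congrArg List.head? h3
          rw [List.head?_append_of_ne_nil _ hu, hhead, List.head?_cons] at h5
          have h6 := congrArg Prod.snd (Option.some.inj h5)
          simp at h6
        · have h5 := congrArg List.getLast? h3
          rw [List.getLast?_concat, List.getLast?_concat] at h5
          have h6 := congrArg Prod.snd (Option.some.inj h5)
          simp at h6
        · have hd0c0 : d0 = c0 := by
            have := (List.append_right_inj u₀).mp h3
            injection this
          subst hd0c0
          have hW : wpow a n = List.replicate ((wpow a n).length) d0 := by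
            apply List.eq_replicate_of_mem
            intro b hb
            rw [hdecomp] at hb
            simp only [SMD.wordInv_wordInv, List.mem_append, List.mem_singleton] at hb
            rcases hb with ((hb | hb) | hb) | hb
            · exact List.eq_of_mem_replicate (hrep ▸ hb)
            · exact hb
            · exact List.eq_of_mem_replicate (hrep ▸ hb)
            · exact hb
          exact endgame_replicate ha hn0 hcen hW
        · obtain ⟨-, hrep2⟩ := cons_eq_append_singleton h3.symm
          have hhead2 : u₀.head? = some d0 := by
            rw [hrep2]; exact head?_replicate' huL d0
          have hcd : c0 = d0 := Option.some.inj (hhead ▸ hhead2)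
          subst hcd
          have hW : wpow a n = List.replicate ((wpow a n).length) c0 := by
            apply List.eq_replicate_of_mem
            intro b hb
            rw [hdecomp] at hb
            simp only [SMD.wordInv_wordInv, List.mem_append, List.mem_singleton] at hb
            rcases hb with ((hb | hb) | hb) | hb
            · exact List.eq_of_mem_replicate (hrep ▸ hb)
            · exact hb
            · exact List.eq_of_mem_replicate (hrep ▸ hb)
            · exact hb
          exact endgame_replicate ha hn0 hcen hW
      · injection h2 with h4 h5
        subst h4
        refine endgame_square hn hane hred hcen
          (show wpow a n = (u₀ ++ [c0]) ++ (u₀ ++ [c0]) from ?_)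
        rw [hdecomp]
        simp [List.append_assoc]
    obtain h | h | h | h | h | h : u₀ = v₀ ∨ u₀ = wordInv v₀ ∨ u₀ = (c0.1, !c0.2) :: v₀ ∨
        u₀ = v₀ ++ [(d0.1, !d0.2)] ∨ u₀ = wordInv v₀ ++ [c0] ∨ u₀ = d0 :: wordInv v₀ := by
      tauto
    · exact key1 h
    · exact key2 h
    · have := congrArg List.length h; simp at this; omega
    · have := congrArg List.length h; simp at this; omega
    · have := congrArg List.length h; simp at this; omega
    · have := congrArg List.length h; simp at this; omega
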